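/- arXiv:1904.08001 — 5 statements merged into one kernel-verified Lean document; each statement's English description precedes it below -/
import Mathlib

section
/- Let ℓ be a prime number, n ≥ 1 an integer, and let G be a profinite group such that every open normal subgroup of G has finite index not divisible by ℓ (equivalently, every finite continuous quotient of G has order prime to ℓ). Then every continuous group homomorphism ρ : G → GL_n(ℚ_ℓ) has finite image; in particular, ρ factors through a finite quotient of G. -/
section Aux

variable {ℓ : ℕ} [Fact ℓ.Prime] {n : ℕ}

private lemma aux_entry_mul {A B : Matrix (Fin n) (Fin n) ℚ_[ℓ]} {a b : ℝ}
    (ha0 : 0 ≤ a) (hb0 : 0 ≤ b)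
    (hA : ∀ i j, ‖A i j‖ ≤ a) (hB : ∀ i j, ‖B i j‖ ≤ b) :
    ∀ i j, ‖(A * B) i j‖ ≤ a * b := by
  intro i j
  rw [Matrix.mul_apply]
  refine IsUltrametricDist.norm_sum_le_of_forall_le_of_nonneg (mul_nonneg ha0 hb0) ?_
  intro k _
  rw [norm_mul]
  exact mul_le_mul (hA i k) (hB k j) (norm_nonneg _) ha0

private lemma aux_entry_pow {A : Matrix (Fin n) (Fin n) ℚ_[ℓ]} {a : ℝ} (ha0 : 0 ≤ a)
    (hA : ∀ i j, ‖A i j‖ ≤ a) : ∀ k : ℕ, 1 ≤ k → ∀ i j, ‖(A ^ k) i j‖ ≤ a ^ k := by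
  intro k hk
  induction k, hk using Nat.le_induction with
  | base => simpa using hA
  | succ k hk ih =>
    rw [pow_succ, pow_succ]
    exact aux_entry_mul (pow_nonneg ha0 k) ha0 ih hA

end Aux

/-- Let ℓ be a prime, n ≥ 1, and G a profinite group all of whose open normal
subgroups have finite index not divisible by ℓ. Then every continuous homomorphism
ρ : G → GL_n(ℚ_ℓ) has finite image, and ρ factors through a finite quotient of G
(i.e. there is an open normal subgroup of finite index contained in the kernel). -/
theorem locsys_wild_inertia_finite_image
    (ℓ : ℕ) [Fact ℓ.Prime] (n : ℕ) (hn : 1 ≤ n)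
    (G : Type*) [Group G] [TopologicalSpace G] [IsTopologicalGroup G]
    [CompactSpace G] [T2Space G] [TotallyDisconnectedSpace G]
    (hG : ∀ N : Subgroup G, N.Normal → IsOpen (N : Set G) →
      N.FiniteIndex ∧ ¬ (ℓ ∣ N.index))
    (ρ : G →* Matrix.GeneralLinearGroup (Fin n) ℚ_[ℓ])
    (hρ : Continuous ρ) :
    (Set.range ρ).Finite ∧
      ∃ N : Subgroup G, N.Normal ∧ IsOpen (N : Set G) ∧ N.FiniteIndex ∧
        ∀ g ∈ N, ρ g = 1 := by
  have hp : ℓ.Prime := Fact.out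
  have hl1 : (1 : ℝ) < (ℓ : ℝ) := by exact_mod_cast hp.one_lt
  set r : ℝ := (ℓ : ℝ)⁻¹ with hrdef
  have hr0 : 0 < r := by
    rw [hrdef]; exact inv_pos.mpr (by linarith)
  have hr1 : r < 1 := by
    rw [hrdef]; exact inv_lt_one_of_one_lt₀ hl1
  -- The open neighborhoods of 1 in GL_n(ℚ_ℓ)
  let V : ℕ → Set (Matrix.GeneralLinearGroup (Fin n) ℚ_[ℓ]) :=
    fun j => {x | ∀ i i', ‖((x : Matrix (Fin n) (Fin n) ℚ_[ℓ]) - 1) i i'‖ < r ^ j}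
  have hVopen : ∀ j, IsOpen (V j) := by
    intro j
    have heq : V j = ⋂ i, ⋂ i',
        {x : Matrix.GeneralLinearGroup (Fin n) ℚ_[ℓ] |
          ‖((x : Matrix (Fin n) (Fin n) ℚ_[ℓ]) - 1) i i'‖ < r ^ j} := by
      ext x; simp [V, Set.mem_iInter]
    rw [heq]
    refine isOpen_iInter_of_finite fun i => isOpen_iInter_of_finite fun i' => ?_
    have hcv : Continuous (fun x : Matrix.GeneralLinearGroup (Fin n) ℚ_[ℓ] =>
        (x : Matrix (Fin n) (Fin n) ℚ_[ℓ])) := Units.continuous_val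
    have hcs : Continuous (fun x : Matrix.GeneralLinearGroup (Fin n) ℚ_[ℓ] =>
        ((x : Matrix (Fin n) (Fin n) ℚ_[ℓ]) - 1)) := hcv.sub continuous_const
    have hc : Continuous fun x : Matrix.GeneralLinearGroup (Fin n) ℚ_[ℓ] =>
        ‖((x : Matrix (Fin n) (Fin n) ℚ_[ℓ]) - 1) i i'‖ :=
      continuous_norm.comp ((continuous_apply i').comp ((continuous_apply i).comp hcs))
    exact isOpen_lt hc continuous_const
  have hmem1 : ∀ j, (1 : Matrix.GeneralLinearGroup (Fin n) ℚ_[ℓ]) ∈ V j := by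
    intro j i i'
    simp only [Units.val_one, sub_self, Matrix.zero_apply, norm_zero]
    positivity
  -- open normal subgroups inside the preimages
  have hsub : ∀ j, ∃ H : OpenNormalSubgroup G, (H : Set G) ⊆ ρ ⁻¹' (V j) := by
    intro j
    have hopen : IsOpen (ρ ⁻¹' (V j)) := (hVopen j).preimage hρ
    have hmem : ρ ⁻¹' (V j) ∈ nhds (1 : G) := by
      refine hopen.mem_nhds ?_
      simp only [Set.mem_preimage, map_one]
      exact hmem1 j
    obtain ⟨W, ⟨hW1, hWclopen⟩, hWsub⟩ := (nhds_basis_clopen (1 : G)).mem_iff.mp hmem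
    obtain ⟨H, hHW⟩ :=
      IsTopologicalGroup.exist_openNormalSubgroup_sub_clopen_nhds_of_one hWclopen hW1
    exact ⟨H, hHW.trans hWsub⟩
  choose H hH using hsub
  have hHnormal : ∀ j, (H j).toSubgroup.Normal := fun j => (H j).isNormal'
  have hHopen : ∀ j, IsOpen ((H j).toSubgroup : Set G) := fun j => (H j).toOpenSubgroup.isOpen'
  have hHfin : ∀ j, (H j).toSubgroup.FiniteIndex ∧ ¬ ℓ ∣ (H j).toSubgroup.index :=
    fun j => hG _ (hHnormal j) (hHopen j)
  set N : Subgroup G := (H 1).toSubgroup with hNdef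
  -- key inductive claim
  have key : ∀ j, 1 ≤ j → ∀ g ∈ N, ∀ i i',
      ‖(((ρ g : Matrix.GeneralLinearGroup (Fin n) ℚ_[ℓ]) :
        Matrix (Fin n) (Fin n) ℚ_[ℓ]) - 1) i i'‖ ≤ r ^ j := by
    intro j hj
    induction j, hj using Nat.le_induction with
    | base =>
      intro g hg i i'
      exact le_of_lt (hH 1 hg i i')
    | succ j hj ih =>
      intro g hg i i'
      set X : Matrix (Fin n) (Fin n) ℚ_[ℓ] := ((ρ g : Matrix.GeneralLinearGroup (Fin n) ℚ_[ℓ]) :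
        Matrix (Fin n) (Fin n) ℚ_[ℓ]) with hXdef
      set Z : Matrix (Fin n) (Fin n) ℚ_[ℓ] := X - 1 with hZdef
      have hZb : ∀ i i', ‖Z i i'‖ ≤ r ^ j := fun i i' => ih g hg i i'
      set m : ℕ := (H (j + 1)).toSubgroup.index with hmdef
      haveI : (H (j + 1)).toSubgroup.FiniteIndex := (hHfin (j + 1)).1
      have hm0 : m ≠ 0 := Subgroup.FiniteIndex.index_ne_zero
      have hm1 : 1 ≤ m := Nat.one_le_iff_ne_zero.mpr hm0
      haveI : (H (j + 1)).toSubgroup.Normal := hHnormal (j + 1)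
      have hgm : g ^ m ∈ (H (j + 1)).toSubgroup := Subgroup.pow_index_mem _ g
      have hXm : ∀ i i', ‖(X ^ m - 1) i i'‖ < r ^ (j + 1) := by
        have h1 := hH (j + 1) hgm
        intro i i'
        have h2 := h1 i i'
        rwa [map_pow, Units.val_pow_eq_pow_val] at h2
      -- binomial expansion
      have hX : X = Z + 1 := by rw [hZdef, sub_add_cancel]
      have hexp : X ^ m = ∑ i ∈ Finset.range (m + 1), (m.choose i) • Z ^ i := by
        rw [hX, (Commute.one_right Z).add_pow]
        refine Finset.sum_congr rfl fun i _ => ?_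
        rw [one_pow, mul_one, ← (Nat.cast_commute (m.choose i) (Z ^ i)).eq, ← nsmul_eq_mul]
      set S2 : Matrix (Fin n) (Fin n) ℚ_[ℓ] :=
        ∑ i ∈ Finset.Ico 2 (m + 1), (m.choose i) • Z ^ i with hS2def
      have hsplit : X ^ m = 1 + m • Z + S2 := by
        rw [hexp, Finset.range_eq_Ico,
          Finset.sum_eq_sum_Ico_succ_bot (by omega : 0 < m + 1),
          Finset.sum_eq_sum_Ico_succ_bot (by omega : 1 < m + 1)]
        have h0 : (m.choose 0) • Z ^ 0 = (1 : Matrix (Fin n) (Fin n) ℚ_[ℓ]) := by simp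
        have h1 : (m.choose 1) • Z ^ 1 = m • Z := by simp
        rw [h0, h1, ← add_assoc]
      -- entry identity
      have hMZ : (m : ℚ_[ℓ]) * Z i i' = (X ^ m - 1) i i' - S2 i i' := by
        have : (m • Z) = (X ^ m - 1) - S2 := by
          rw [hsplit]; abel
        have h3 := congrFun (congrFun this i) i'
        rw [Matrix.smul_apply, nsmul_eq_mul] at h3
        rw [h3, Matrix.sub_apply]
      -- bound on S2 entries
      have hS2b : ‖S2 i i'‖ ≤ r ^ (j + 1) := by
        rw [hS2def, Matrix.sum_apply]
        refine IsUltrametricDist.norm_sum_le_of_forall_le_of_nonneg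
          (le_of_lt (pow_pos hr0 _)) ?_
        intro k hk
        rw [Finset.mem_Ico] at hk
        rw [Matrix.smul_apply, nsmul_eq_mul, norm_mul]
        have hc1 : ‖((m.choose k : ℕ) : ℚ_[ℓ])‖ ≤ 1 := by
          have := Padic.norm_int_le_one (p := ℓ) (m.choose k : ℤ)
          push_cast at this
          exact this
        have hzk : ‖(Z ^ k) i i'‖ ≤ (r ^ j) ^ k :=
          aux_entry_pow (le_of_lt (pow_pos hr0 j)) hZb k (by omega) i i'
        have hrj : (r ^ j) ^ k ≤ r ^ (j + 1) := by
          rw [← pow_mul]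
          refine pow_le_pow_of_le_one (le_of_lt hr0) (le_of_lt hr1) ?_
          nlinarith [hk.1, hj]
        calc ‖((m.choose k : ℕ) : ℚ_[ℓ])‖ * ‖(Z ^ k) i i'‖
            ≤ 1 * ((r ^ j) ^ k) :=
              mul_le_mul hc1 hzk (norm_nonneg _) zero_le_one
          _ = (r ^ j) ^ k := one_mul _
          _ ≤ r ^ (j + 1) := hrj
      -- ‖m‖ = 1
      have hmnorm : ‖((m : ℕ) : ℚ_[ℓ])‖ = 1 := by
        have hle : ‖((m : ℕ) : ℚ_[ℓ])‖ ≤ 1 := by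
          have := Padic.norm_int_le_one (p := ℓ) (m : ℤ)
          push_cast at this
          exact this
        refine le_antisymm hle ?_
        by_contra hlt
        push_neg at hlt
        have : (ℓ : ℤ) ∣ (m : ℤ) := by
          have h4 : ‖(((m : ℤ) : ℤ) : ℚ_[ℓ])‖ < 1 := by push_cast; push_cast at hlt; exact hlt
          exact (Padic.norm_intCast_lt_one_iff (k := (m : ℤ))).mp (by push_cast; push_cast at hlt; exact hlt)
        exact (hHfin (j + 1)).2 (by exact_mod_cast this)
      -- conclude
      have : ‖Z i i'‖ = ‖(m : ℚ_[ℓ]) * Z i i'‖ := by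
        rw [norm_mul, hmnorm, one_mul]
      rw [hZdef] at this ⊢
      rw [this, hMZ, sub_eq_add_neg]
      refine le_trans (IsUltrametricDist.norm_add_le_max _ _) ?_
      rw [norm_neg]
      exact max_le (le_of_lt (hXm i i')) hS2b
  -- every element of N maps to 1
  have hker : ∀ g ∈ N, ρ g = 1 := by
    intro g hg
    have hz : ((ρ g : Matrix.GeneralLinearGroup (Fin n) ℚ_[ℓ]) :
        Matrix (Fin n) (Fin n) ℚ_[ℓ]) - 1 = 0 := by
      ext i i'
      rw [Matrix.zero_apply]
      by_contra hne
      have hpos : 0 < ‖(((ρ g : Matrix.GeneralLinearGroup (Fin n) ℚ_[ℓ]) :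
          Matrix (Fin n) (Fin n) ℚ_[ℓ]) - 1) i i'‖ := norm_pos_iff.mpr hne
      obtain ⟨k, hk⟩ := exists_pow_lt_of_lt_one hpos hr1
      have h5 := key (k + 1) (by omega) g hg i i'
      have h6 : r ^ (k + 1) ≤ r ^ k :=
        pow_le_pow_of_le_one (le_of_lt hr0) (le_of_lt hr1) (by omega)
      linarith
    have hval : ((ρ g : Matrix.GeneralLinearGroup (Fin n) ℚ_[ℓ]) :
        Matrix (Fin n) (Fin n) ℚ_[ℓ]) = 1 := by
      have := sub_eq_zero.mp hz
      exact this
    exact Units.ext hval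
  haveI : N.FiniteIndex := (hHfin 1).1
  refine ⟨?_, N, hHnormal 1, hHopen 1, (hHfin 1).1, hker⟩
  have hle : N ≤ ρ.ker := fun g hg => hker g hg
  let f : G ⧸ N → Matrix.GeneralLinearGroup (Fin n) ℚ_[ℓ] := QuotientGroup.lift N ρ hle
  have hsubr : Set.range ρ ⊆ Set.range f := by
    rintro x ⟨g, rfl⟩
    exact ⟨QuotientGroup.mk g, rfl⟩
  exact (Set.finite_range f).subset hsubr
end

section
/- Let ℓ be a prime number, n ≥ 1, let G be a compact topological group, and let ρ : G → GL_n(ℚ_ℓ) be a continuous group homomorphism. Then ρ preserves a lattice up to conjugation: there exists M ∈ GL_n(ℚ_ℓ) such that for every g ∈ G all entries of the matrix M·ρ(g)·M⁻¹ lie in ℤ_ℓ (i.e. have ℓ-adic norm at most 1), so the conjugated representation takes values in GL_n(ℤ_ℓ). -/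
open Matrix

section Aux

variable (p : ℕ) [Fact p.Prime] (n : ℕ)

/-- The submodule of vectors all of whose coordinates have norm at most `C`. -/
noncomputable def boundedSubmodule (C : ℝ) (hC : 0 ≤ C) :
    Submodule ℤ_[p] (Fin n → ℚ_[p]) where
  carrier := {x | ∀ i, ‖x i‖ ≤ C}
  add_mem' := by
    intro x y hx hy i
    refine le_trans ?_ (max_le (hx i) (hy i))
    exact Padic.nonarchimedean _ _
  zero_mem' := by intro i; simpa using hC
  smul_mem' := by
    intro r x hx i
    have h1 : (r • x) i = (r : ℚ_[p]) * x i := by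
      simp [Algebra.smul_def, PadicInt.algebraMap_apply]
    rw [h1, norm_mul]
    calc ‖(r : ℚ_[p])‖ * ‖x i‖ ≤ 1 * C := by
          refine mul_le_mul ?_ (hx i) (norm_nonneg _) zero_le_one
          rw [PadicInt.padic_norm_e_of_padicInt]; exact PadicInt.norm_le_one r
      _ = C := one_mul C

lemma mem_boundedSubmodule {C : ℝ} {hC : 0 ≤ C} {x : Fin n → ℚ_[p]} :
    x ∈ boundedSubmodule p n C hC ↔ ∀ i, ‖x i‖ ≤ C := Iff.rfl

end Aux

set_option maxHeartbeats 1000000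

/-- A continuous representation ρ : G → GL_n(ℚ_ℓ) of a compact group G
preserves a lattice up to conjugation: there is M ∈ GL_n(ℚ_ℓ) such that all entries of
M·ρ(g)·M⁻¹ have ℓ-adic norm at most 1 (i.e. lie in ℤ_ℓ), for every g ∈ G. -/
theorem compact_group_rep_preserves_lattice
    (ℓ : ℕ) [Fact ℓ.Prime] (n : ℕ) (hn : 1 ≤ n)
    (G : Type*) [Group G] [TopologicalSpace G] [IsTopologicalGroup G] [CompactSpace G]
    (ρ : G →* Matrix.GeneralLinearGroup (Fin n) ℚ_[ℓ])
    (hρ : Continuous ρ) :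
    ∃ M : Matrix.GeneralLinearGroup (Fin n) ℚ_[ℓ],
      ∀ g : G, ∀ i j : Fin n,
        ‖((M * ρ g * M⁻¹ : Matrix.GeneralLinearGroup (Fin n) ℚ_[ℓ]) :
            Matrix (Fin n) (Fin n) ℚ_[ℓ]) i j‖ ≤ 1 := by
  classical
  -- a uniform bound on the entries of all ρ g
  obtain ⟨C, hC⟩ : ∃ C : ℝ, ∀ g : G, ∀ i j : Fin n,
      ‖((ρ g : Matrix (Fin n) (Fin n) ℚ_[ℓ])) i j‖ ≤ C ∧
      (∑ j' : Fin n, ‖((ρ g : Matrix (Fin n) (Fin n) ℚ_[ℓ])) i j'‖) ≤ C := by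
    have hcont : Continuous fun g : G =>
        ∑ i : Fin n, ∑ j : Fin n, ‖((ρ g : Matrix (Fin n) (Fin n) ℚ_[ℓ])) i j‖ := by
      refine continuous_finset_sum _ fun i _ => continuous_finset_sum _ fun j _ => ?_
      exact (((continuous_apply j).comp (continuous_apply i)).comp
        (Units.continuous_val.comp hρ)).norm
    obtain ⟨C, hC⟩ := (isCompact_range hcont).bddAbove
    refine ⟨C, fun g i j => ?_⟩
    have hsum : (∑ i' : Fin n, ∑ j' : Fin n,
        ‖((ρ g : Matrix (Fin n) (Fin n) ℚ_[ℓ])) i' j'‖) ≤ C := hC ⟨g, rfl⟩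
    have hrow : (∑ j' : Fin n, ‖((ρ g : Matrix (Fin n) (Fin n) ℚ_[ℓ])) i j'‖) ≤ C := by
      refine le_trans ?_ hsum
      exact Finset.single_le_sum (fun i' _ => Finset.sum_nonneg fun j' _ => norm_nonneg _)
        (Finset.mem_univ i)
    refine ⟨le_trans ?_ hrow, hrow⟩
    exact Finset.single_le_sum (fun j' _ => norm_nonneg _) (Finset.mem_univ j)
  set C₀ : ℝ := max C 1 with hC₀def
  have hC₀one : (1:ℝ) ≤ C₀ := le_max_right _ _
  have hC₀nn : (0:ℝ) ≤ C₀ := zero_le_one.trans hC₀one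
  -- basic setup
  set e : Module.Basis (Fin n) ℚ_[ℓ] (Fin n → ℚ_[ℓ]) := Pi.basisFun ℚ_[ℓ] (Fin n) with he
  set Λ : Submodule ℤ_[ℓ] (Fin n → ℚ_[ℓ]) := Submodule.span ℤ_[ℓ] (Set.range ⇑e) with hΛ
  have hsmul_coe : ∀ (r : ℤ_[ℓ]) (x : ℚ_[ℓ]), r • x = (r : ℚ_[ℓ]) * x := by
    intro r x; simp [Algebra.smul_def, PadicInt.algebraMap_apply]
  -- membership criterion for Λ
  have hmemΛ : ∀ x : Fin n → ℚ_[ℓ], (∀ i, ‖x i‖ ≤ 1) → x ∈ Λ := by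
    intro x hx
    set r : Fin n → ℤ_[ℓ] := fun i => ⟨x i, hx i⟩ with hr
    have hxe : x = ∑ i, r i • e i := by
      funext j
      rw [Finset.sum_apply]
      have : ∀ i : Fin n, (r i • e i) j
          = if j = i then x i else 0 := by
        intro i
        rw [Pi.smul_apply, he, Pi.basisFun_apply, Pi.single_apply]
        by_cases h : j = i <;> simp [h, hsmul_coe] <;> rfl
      rw [Finset.sum_congr rfl fun i _ => this i]
      simp
    rw [hxe]
    exact Submodule.sum_mem _ fun i _ =>
      Submodule.smul_mem _ _ (Submodule.subset_span ⟨i, rfl⟩)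
  have hΛbd : ∀ x ∈ Λ, ∀ i, ‖x i‖ ≤ 1 := by
    intro x hx i
    have : Λ ≤ boundedSubmodule ℓ n 1 zero_le_one := by
      rw [hΛ, Submodule.span_le]
      rintro _ ⟨i', rfl⟩ j
      rw [he, Pi.basisFun_apply, Pi.single_apply]
      by_cases h : j = i' <;> simp [h]
    exact this hx i
  -- the R-linear endomorphisms given by ρ
  set f : G → (Fin n → ℚ_[ℓ]) →ₗ[ℤ_[ℓ]] (Fin n → ℚ_[ℓ]) := fun g =>
    ((ρ g : Matrix (Fin n) (Fin n) ℚ_[ℓ]).mulVecLin).restrictScalars ℤ_[ℓ] with hf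
  have hf_apply : ∀ g x, f g x = (ρ g : Matrix (Fin n) (Fin n) ℚ_[ℓ]) *ᵥ x := by
    intro g x; rfl
  have hf_mul : ∀ g h : G, f (g * h) = (f g).comp (f h) := by
    intro g h
    ext x
    simp only [hf, LinearMap.coe_restrictScalars, LinearMap.coe_comp, Function.comp_apply,
      Matrix.mulVecLin_apply]
    rw [map_mul ρ g h, Units.val_mul, Matrix.mulVec_mulVec]
  -- the lattice generated by the orbit of Λ
  set L : Submodule ℤ_[ℓ] (Fin n → ℚ_[ℓ]) := ⨆ g : G, Λ.map (f g) with hL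
  have hΛL : Λ ≤ L := by
    have h1 : Λ.map (f 1) = Λ := by
      have : f 1 = LinearMap.id := by
        ext x
        simp [hf, Matrix.mulVecLin_apply, map_one ρ, Units.val_one]
      rw [this, Submodule.map_id]
    calc Λ = Λ.map (f 1) := h1.symm
      _ ≤ L := le_iSup (fun g => Λ.map (f g)) 1
  have hLstab : ∀ g : G, L.map (f g) ≤ L := by
    intro g
    rw [hL, Submodule.map_iSup]
    refine iSup_le fun h => ?_
    rw [← Submodule.map_comp, ← hf_mul]
    exact le_iSup (fun g' => Λ.map (f g')) (g * h)
  -- L is bounded by C₀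
  have hLbd : ∀ x ∈ L, ∀ i, ‖x i‖ ≤ C₀ := by
    have hle : L ≤ boundedSubmodule ℓ n C₀ hC₀nn := by
      rw [hL]
      refine iSup_le fun g => ?_
      rintro _ ⟨x, hx, rfl⟩ i
      rw [hf_apply]
      have hmv : ((ρ g : Matrix (Fin n) (Fin n) ℚ_[ℓ]) *ᵥ x) i
          = ∑ j, (ρ g : Matrix (Fin n) (Fin n) ℚ_[ℓ]) i j * x j := rfl
      rw [hmv]
      refine le_trans (norm_sum_le _ _) ?_
      calc (∑ j, ‖(ρ g : Matrix (Fin n) (Fin n) ℚ_[ℓ]) i j * x j‖)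
          ≤ ∑ j, ‖(ρ g : Matrix (Fin n) (Fin n) ℚ_[ℓ]) i j‖ := by
            refine Finset.sum_le_sum fun j _ => ?_
            rw [norm_mul]
            exact mul_le_of_le_one_right (norm_nonneg _) (hΛbd x hx j)
        _ ≤ C := (hC g i i).2
        _ ≤ C₀ := le_max_left _ _
    intro x hx i
    exact hle hx i
  -- choose the scaling factor
  obtain ⟨k, hk⟩ : ∃ k : ℕ, C₀ ≤ (ℓ : ℝ) ^ k := by
    have h1 : (1:ℝ) < (ℓ:ℝ) := by
      exact_mod_cast (Fact.out : ℓ.Prime).one_lt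
    obtain ⟨k, hk⟩ := pow_unbounded_of_one_lt C₀ h1
    exact ⟨k, hk.le⟩
  set c : ℤ_[ℓ] := (ℓ : ℤ_[ℓ]) ^ k with hc
  have hc_norm : ‖(c : ℚ_[ℓ])‖ = ((ℓ : ℝ) ^ k)⁻¹ := by
    rw [hc]
    push_cast
    rw [norm_pow, Padic.norm_p, inv_pow]
  have hℓpos : (0:ℝ) < (ℓ:ℝ) ^ k := by
    have : (0:ℝ) < (ℓ:ℝ) := by exact_mod_cast (Fact.out : ℓ.Prime).pos
    positivity
  -- scaled lattice
  set σ : (Fin n → ℚ_[ℓ]) →ₗ[ℤ_[ℓ]] (Fin n → ℚ_[ℓ]) := c • LinearMap.id with hσ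
  have hσ_apply : ∀ x, σ x = c • x := fun x => rfl
  set L2 : Submodule ℤ_[ℓ] (Fin n → ℚ_[ℓ]) := L.map σ with hL2
  have hL2Λ : L2 ≤ Λ := by
    rw [hL2]
    rintro _ ⟨x, hx, rfl⟩
    refine hmemΛ _ fun i => ?_
    rw [hσ_apply]
    have h1 : (c • x) i = (c : ℚ_[ℓ]) * x i := by
      rw [Pi.smul_apply, hsmul_coe]
    rw [h1, norm_mul, hc_norm]
    calc ((ℓ:ℝ) ^ k)⁻¹ * ‖x i‖ ≤ ((ℓ:ℝ) ^ k)⁻¹ * ((ℓ:ℝ) ^ k) := by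
          refine mul_le_mul_of_nonneg_left ((hLbd x hx i).trans hk) (by positivity)
      _ = 1 := inv_mul_cancel₀ (ne_of_gt hℓpos)
  have hL2stab : ∀ g : G, ∀ x ∈ L2, f g x ∈ L2 := by
    intro g x hx
    rw [hL2] at hx ⊢
    obtain ⟨y, hy, rfl⟩ := hx
    refine ⟨f g y, hLstab g ⟨y, hy, rfl⟩, ?_⟩
    rw [hσ_apply, hσ_apply, LinearMap.map_smul]
  -- basis of Λ
  have heR : LinearIndependent ℤ_[ℓ] (⇑e : Fin n → (Fin n → ℚ_[ℓ])) :=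
    (LinearIndependent.iff_fractionRing ℤ_[ℓ] ℚ_[ℓ]).mpr e.linearIndependent
  let bΛ : Module.Basis (Fin n) ℤ_[ℓ] Λ := Module.Basis.span heR
  -- basis of L2
  obtain ⟨m, bL2⟩ := Submodule.basisOfPidOfLE hL2Λ bΛ
  set v : Fin m → (Fin n → ℚ_[ℓ]) := fun i => (bL2 i : Fin n → ℚ_[ℓ]) with hv
  have hvli : LinearIndependent ℚ_[ℓ] v := by
    have h1 : LinearIndependent ℤ_[ℓ] v := by
      have := bL2.linearIndependent
      exact this.map' L2.subtype (Submodule.ker_subtype L2)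
    exact (LinearIndependent.iff_fractionRing ℤ_[ℓ] ℚ_[ℓ]).mp h1
  -- elements of L2 are in the K-span of v
  have hL2span : ∀ x ∈ L2, x ∈ Submodule.span ℚ_[ℓ] (Set.range v) := by
    intro x hx
    have h1 : ((∑ i, bL2.repr ⟨x, hx⟩ i • bL2 i : L2) : Fin n → ℚ_[ℓ]) = x := by
      rw [bL2.sum_repr ⟨x, hx⟩]
    have h2 : x = ∑ i, bL2.repr ⟨x, hx⟩ i • v i := by
      refine h1.symm.trans ?_
      push_cast
      rfl
    rw [h2]
    refine Submodule.sum_mem _ fun i _ => ?_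
    rw [← algebraMap_smul ℚ_[ℓ] (bL2.repr ⟨x, hx⟩ i) (v i)]
    exact Submodule.smul_mem _ _ (Submodule.subset_span ⟨i, rfl⟩)
  have hvsp : ⊤ ≤ Submodule.span ℚ_[ℓ] (Set.range v) := by
    rw [← e.span_eq]
    rw [Submodule.span_le]
    rintro _ ⟨i, rfl⟩
    have h1 : c • e i ∈ L2 := ⟨e i, hΛL (Submodule.subset_span ⟨i, rfl⟩), rfl⟩
    have h2 : (c : ℚ_[ℓ]) ≠ 0 := by
      intro h
      rw [h, norm_zero] at hc_norm
      exact absurd hc_norm.symm (by positivity)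
    have h3 : e i = ((c : ℚ_[ℓ]))⁻¹ • (c • e i) := by
      rw [← algebraMap_smul ℚ_[ℓ] c (e i), PadicInt.algebraMap_apply, smul_smul,
        inv_mul_cancel₀ h2, one_smul]
    rw [h3]
    exact Submodule.smul_mem _ _ (hL2span _ h1)
  -- m = n
  have hb' : Module.Basis (Fin m) ℚ_[ℓ] (Fin n → ℚ_[ℓ]) := Module.Basis.mk hvli hvsp
  have hmn : m = n := by
    have h1 := Module.finrank_eq_card_basis hb'
    have h2 := Module.finrank_eq_card_basis e
    rw [Fintype.card_fin] at h1 h2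
    omega
  subst hmn
  set b : Module.Basis (Fin m) ℚ_[ℓ] (Fin m → ℚ_[ℓ]) := Module.Basis.mk hvli hvsp with hb
  have hb_apply : ∀ i, b i = v i := by intro i; rw [hb]; exact Module.Basis.mk_apply hvli hvsp i
  -- coordinates w.r.t. b of elements of L2 are integral
  have hrepr : ∀ x, ∀ hx : x ∈ L2, ∀ i, ‖b.repr x i‖ ≤ 1 := by
    intro x hx i
    have h1 : ((∑ j, bL2.repr ⟨x, hx⟩ j • bL2 j : L2) : Fin m → ℚ_[ℓ]) = x := by
      rw [bL2.sum_repr ⟨x, hx⟩]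
    have h2 : x = ∑ j, (algebraMap ℤ_[ℓ] ℚ_[ℓ] (bL2.repr ⟨x, hx⟩ j)) • b j := by
      refine h1.symm.trans ?_
      push_cast
      refine Finset.sum_congr rfl fun j _ => ?_
      rw [hb_apply, algebraMap_smul]
    have h3 : (b.repr x : Fin m → ℚ_[ℓ]) i
        = algebraMap ℤ_[ℓ] ℚ_[ℓ] (bL2.repr ⟨x, hx⟩ i) := by
      conv_lhs => rw [h2]
      rw [b.repr_sum_self]
    rw [h3, PadicInt.algebraMap_apply, PadicInt.padic_norm_e_of_padicInt]
    exact PadicInt.norm_le_one _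
  have hbL2 : ∀ i, b i ∈ L2 := by
    intro i
    rw [hb_apply]
    exact (bL2 i).2
  -- construct M
  set Mu : Matrix.GeneralLinearGroup (Fin m) ℚ_[ℓ] :=
    ⟨b.toMatrix ⇑e, e.toMatrix ⇑b, Module.Basis.toMatrix_mul_toMatrix_flip b e,
      Module.Basis.toMatrix_mul_toMatrix_flip e b⟩ with hMu
  refine ⟨Mu, ?_⟩
  intro g i j
  have hval : ((Mu * ρ g * Mu⁻¹ : Matrix.GeneralLinearGroup (Fin m) ℚ_[ℓ]) :
        Matrix (Fin m) (Fin m) ℚ_[ℓ])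
      = b.toMatrix ⇑e * (ρ g : Matrix (Fin m) (Fin m) ℚ_[ℓ]) * e.toMatrix ⇑b := by
    rw [Units.val_mul, Units.val_mul, hMu]
    rfl
  rw [hval]
  have hmat : b.toMatrix ⇑e * (ρ g : Matrix (Fin m) (Fin m) ℚ_[ℓ]) * e.toMatrix ⇑b
      = LinearMap.toMatrix b b
        (Matrix.toLin e e (ρ g : Matrix (Fin m) (Fin m) ℚ_[ℓ])) := by
    conv_lhs => rw [← LinearMap.toMatrix_toLin e e (ρ g : Matrix (Fin m) (Fin m) ℚ_[ℓ])]
    exact basis_toMatrix_mul_linearMap_toMatrix_mul_basis_toMatrix b e b e _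
  rw [hmat, LinearMap.toMatrix_apply]
  have h4 : Matrix.toLin e e (ρ g : Matrix (Fin m) (Fin m) ℚ_[ℓ]) (b j) = f g (b j) := by
    rw [he, Matrix.toLin_eq_toLin', Matrix.toLin'_apply, hf_apply]
  rw [h4]
  exact hrepr _ (hL2stab g _ (hbL2 j)) i
end

section
/- Let ℓ be a prime number, n ≥ 1, and let G be a profinite group such that every open normal subgroup of G has finite index not divisible by ℓ. Let ρ : G → GL_n(ℤ_ℓ) be a continuous group homomorphism. If g ∈ G is such that ρ(g) reduces to the identity modulo ℓ (i.e. every entry of ρ(g) − I is divisible by ℓ), then ρ(g) = I. Equivalently, the image of ρ meets the congruence subgroup N₁ = ker(π : GL_n(ℤ_ℓ) → GL_n(𝔽_ℓ)) only in the identity. -/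
section Aux

variable {ℓ : ℕ} [Fact ℓ.Prime] {n : ℕ}

private lemma dvd_mul_entry' {d : ℤ_[ℓ]} {B C : Matrix (Fin n) (Fin n) ℤ_[ℓ]}
    (hC : ∀ i j, d ∣ C i j) (i j : Fin n) : d ∣ (B * C) i j := by
  rw [Matrix.mul_apply]
  exact Finset.dvd_sum fun k _ => (hC k j).mul_left _

private lemma pow_sub_one_dvd {k : ℕ} {A : Matrix (Fin n) (Fin n) ℤ_[ℓ]}
    (h1 : ∀ i j, (ℓ : ℤ_[ℓ]) ^ k ∣ (A - 1) i j) (m : ℕ) :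
    ∀ i j, (ℓ : ℤ_[ℓ]) ^ k ∣ (A ^ m - 1) i j := by
  induction m with
  | zero => simp
  | succ m ih =>
    have key : A ^ (m + 1) - 1 = (A ^ m - 1) + A ^ m * (A - 1) := by
      rw [pow_succ]; noncomm_ring
    intro i j
    rw [key, Matrix.add_apply]
    exact dvd_add (ih i j) (dvd_mul_entry' h1 i j)

private lemma pow_sub_one_sub_smul_dvd {k : ℕ} {A : Matrix (Fin n) (Fin n) ℤ_[ℓ]}
    (h1 : ∀ i j, (ℓ : ℤ_[ℓ]) ^ k ∣ (A - 1) i j) (m : ℕ) :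
    ∀ i j, (ℓ : ℤ_[ℓ]) ^ (2 * k) ∣ (A ^ m - 1 - m • (A - 1)) i j := by
  induction m with
  | zero => simp
  | succ m ih =>
    have key : A ^ (m + 1) - 1 - (m + 1) • (A - 1)
        = (A ^ m - 1 - m • (A - 1)) + (A ^ m - 1) * (A - 1) := by
      rw [succ_nsmul, pow_succ]
      have expand : A ^ m * A = (A ^ m - 1) * (A - 1) + (A ^ m - 1) + (A - 1) + 1 := by
        noncomm_ring
      rw [expand]; abel
    intro i j
    rw [key, Matrix.add_apply]
    have h2 : (ℓ : ℤ_[ℓ]) ^ (2 * k) ∣ ((A ^ m - 1) * (A - 1)) i j := by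
      rw [two_mul, pow_add, Matrix.mul_apply]
      exact Finset.dvd_sum fun c _ => mul_dvd_mul (pow_sub_one_dvd h1 m i c) (h1 c j)
    exact dvd_add (ih i j) h2

private lemma level_up {k m : ℕ} (hk : 1 ≤ k) (hm : ¬ ℓ ∣ m)
    {A : Matrix (Fin n) (Fin n) ℤ_[ℓ]}
    (h1 : ∀ i j, (ℓ : ℤ_[ℓ]) ^ k ∣ (A - 1) i j)
    (h2 : ∀ i j, (ℓ : ℤ_[ℓ]) ^ (k + 1) ∣ (A ^ m - 1) i j) :
    ∀ i j, (ℓ : ℤ_[ℓ]) ^ (k + 1) ∣ (A - 1) i j := by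
  intro i j
  have hunit : IsUnit (m : ℤ_[ℓ]) := by
    rw [PadicInt.isUnit_iff]
    rcases lt_or_eq_of_le (PadicInt.norm_le_one (m : ℤ_[ℓ])) with h | h
    · exfalso
      apply hm
      have h' : ‖((m : ℤ) : ℤ_[ℓ])‖ < 1 := by rw [Int.cast_natCast]; exact h
      exact_mod_cast (PadicInt.norm_int_lt_one_iff_dvd (m : ℤ)).mp h'
    · exact h
  have hd : (ℓ : ℤ_[ℓ]) ^ (k + 1) ∣ (A ^ m - 1 - m • (A - 1)) i j := by
    have h2k : k + 1 ≤ 2 * k := by omega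
    exact (pow_dvd_pow _ h2k).trans (pow_sub_one_sub_smul_dvd h1 m i j)
  have hsub : (A ^ m - 1) i j - (A ^ m - 1 - m • (A - 1)) i j = (m : ℤ_[ℓ]) * (A - 1) i j := by
    rw [Matrix.sub_apply (A ^ m - 1) (m • (A - 1)), Matrix.smul_apply, nsmul_eq_mul]
    ring
  have : (ℓ : ℤ_[ℓ]) ^ (k + 1) ∣ (m : ℤ_[ℓ]) * (A - 1) i j := by
    rw [← hsub]; exact dvd_sub (h2 i j) hd
  exact hunit.dvd_mul_left.mp this

end Aux


/-- Let G be a profinite group all of whose open normal subgroups have finite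
index prime to ℓ, and ρ : G → GL_n(ℤ_ℓ) a continuous homomorphism. If ρ(g) is congruent
to the identity mod ℓ then ρ(g) = 1; i.e. the image of ρ meets the congruence subgroup
N₁ = ker(GL_n(ℤ_ℓ) → GL_n(𝔽_ℓ)) only in the identity. -/
theorem image_meets_congruence_subgroup_trivially
    (ℓ : ℕ) [Fact ℓ.Prime] (n : ℕ) (hn : 1 ≤ n)
    (G : Type*) [Group G] [TopologicalSpace G] [IsTopologicalGroup G]
    [CompactSpace G] [T2Space G] [TotallyDisconnectedSpace G]
    (hG : ∀ N : Subgroup G, N.Normal → IsOpen (N : Set G) →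
      N.FiniteIndex ∧ ¬ (ℓ ∣ N.index))
    (ρ : G →* Matrix.GeneralLinearGroup (Fin n) ℤ_[ℓ])
    (hρ : Continuous ρ)
    (g : G)
    (hg : ∀ i j : Fin n,
      (ℓ : ℤ_[ℓ]) ∣ (((ρ g : Matrix (Fin n) (Fin n) ℤ_[ℓ]) -
        (1 : Matrix (Fin n) (Fin n) ℤ_[ℓ])) i j)) :
    ρ g = 1 := by
  have hℓ1 : (1 : ℝ) < ℓ := by exact_mod_cast (Fact.out : ℓ.Prime).one_lt
  -- the entry maps are continuous
  have hcont : ∀ i j : Fin n, Continuous fun x : G =>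
      (((ρ x : Matrix (Fin n) (Fin n) ℤ_[ℓ]) - 1) i j) := by
    intro i j
    have h1 : Continuous fun x : G => (ρ x : Matrix (Fin n) (Fin n) ℤ_[ℓ]) :=
      Units.continuous_val.comp hρ
    have h2 : Continuous fun x : G => (ρ x : Matrix (Fin n) (Fin n) ℤ_[ℓ]) i j :=
      (continuous_apply j).comp ((continuous_apply i).comp h1)
    have : (fun x : G => (((ρ x : Matrix (Fin n) (Fin n) ℤ_[ℓ]) - 1) i j))
        = fun x : G => ((ρ x : Matrix (Fin n) (Fin n) ℤ_[ℓ]) i j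
            - (1 : Matrix (Fin n) (Fin n) ℤ_[ℓ]) i j) := by
      funext x; rw [Matrix.sub_apply]
    rw [this]
    exact h2.sub continuous_const
  -- for every k there is m prime to ℓ with (ρ g)^m ≡ 1 mod ℓ^k
  have key : ∀ k : ℕ, ∃ m : ℕ, ¬ ℓ ∣ m ∧ ∀ i j : Fin n,
      (ℓ : ℤ_[ℓ]) ^ k ∣ ((((ρ g : Matrix (Fin n) (Fin n) ℤ_[ℓ])) ^ m - 1) i j) := by
    intro k
    set S : Set ℤ_[ℓ] := {z : ℤ_[ℓ] | ‖z‖ ≤ (ℓ : ℝ) ^ (-(k : ℤ))} with hSdef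
    have hSclopen : IsClopen S := by
      constructor
      · exact isClosed_le continuous_norm continuous_const
      · have : S = {z : ℤ_[ℓ] | ‖z‖ < (ℓ : ℝ) ^ (-(k : ℤ) + 1)} :=
          Set.ext fun z => PadicInt.norm_le_pow_iff_norm_lt_pow_add_one z _
        rw [this]
        exact isOpen_lt continuous_norm continuous_const
    set W : Set G := ⋂ p : Fin n × Fin n,
      (fun x : G => (((ρ x : Matrix (Fin n) (Fin n) ℤ_[ℓ]) - 1) p.1 p.2)) ⁻¹' S with hWdef
    have hWclopen : IsClopen W := by
      have : W = ⋂ p ∈ (Finset.univ : Finset (Fin n × Fin n)),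
          (fun x : G => (((ρ x : Matrix (Fin n) (Fin n) ℤ_[ℓ]) - 1) p.1 p.2)) ⁻¹' S := by
        simp [hWdef]
      rw [this]
      exact isClopen_biInter_finset fun p _ => hSclopen.preimage (hcont p.1 p.2)
    have h1W : (1 : G) ∈ W := by
      rw [hWdef]
      refine Set.mem_iInter.mpr fun p => ?_
      simp only [Set.mem_preimage, hSdef, Set.mem_setOf_eq, map_one, Units.val_one, sub_self,
        Matrix.zero_apply, norm_zero]
      positivity
    obtain ⟨H, hH⟩ :=
      IsTopologicalGroup.exist_openNormalSubgroup_sub_clopen_nhds_of_one hWclopen h1W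
    haveI := H.isNormal'
    obtain ⟨hfi, hnd⟩ := hG H.toSubgroup H.isNormal' H.isOpen
    haveI := hfi
    refine ⟨H.toSubgroup.index, hnd, ?_⟩
    have hmem : g ^ H.toSubgroup.index ∈ H.toSubgroup := Subgroup.pow_index_mem _ g
    have hmemW : g ^ H.toSubgroup.index ∈ W := hH hmem
    intro i j
    have := Set.mem_iInter.mp hmemW (i, j)
    simp only [Set.mem_preimage, hSdef, Set.mem_setOf_eq] at this
    rw [PadicInt.norm_le_pow_iff_mem_span_pow, Ideal.mem_span_singleton] at this
    have heq : (ρ (g ^ H.toSubgroup.index) : Matrix (Fin n) (Fin n) ℤ_[ℓ])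
        = (ρ g : Matrix (Fin n) (Fin n) ℤ_[ℓ]) ^ H.toSubgroup.index := by
      rw [map_pow, Units.val_pow_eq_pow_val]
    rwa [heq] at this
  -- main induction: ρ g ≡ 1 mod ℓ^(k+1) for every k
  have main : ∀ k : ℕ, ∀ i j : Fin n,
      (ℓ : ℤ_[ℓ]) ^ (k + 1) ∣ (((ρ g : Matrix (Fin n) (Fin n) ℤ_[ℓ]) - 1) i j) := by
    intro k
    induction k with
    | zero => intro i j; simpa using hg i j
    | succ k ih =>
      obtain ⟨m, hm, hpow⟩ := key (k + 2)
      exact level_up (Nat.succ_le_succ (Nat.zero_le k)) hm ih hpow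
  -- conclude
  have hzero : ∀ i j : Fin n, (((ρ g : Matrix (Fin n) (Fin n) ℤ_[ℓ]) - 1) i j) = 0 := by
    intro i j
    have hnorm : ∀ k : ℕ, ‖(((ρ g : Matrix (Fin n) (Fin n) ℤ_[ℓ]) - 1) i j)‖
        ≤ (ℓ : ℝ) ^ (-(k : ℤ)) := by
      intro k
      rw [PadicInt.norm_le_pow_iff_mem_span_pow, Ideal.mem_span_singleton]
      exact (pow_dvd_pow _ (Nat.le_succ k)).trans (main k i j)
    have hlim : Filter.Tendsto (fun k : ℕ => (ℓ : ℝ) ^ (-(k : ℤ))) Filter.atTop (nhds 0) := by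
      have : (fun k : ℕ => (ℓ : ℝ) ^ (-(k : ℤ))) = fun k : ℕ => ((ℓ : ℝ)⁻¹) ^ k := by
        funext k; rw [zpow_neg, zpow_natCast, inv_pow]
      rw [this]
      exact tendsto_pow_atTop_nhds_zero_of_lt_one (by positivity) (inv_lt_one_of_one_lt₀ hℓ1)
    have hle : ‖(((ρ g : Matrix (Fin n) (Fin n) ℤ_[ℓ]) - 1) i j)‖ ≤ 0 :=
      ge_of_tendsto' hlim hnorm
    exact norm_le_zero_iff.mp hle
  have hmat : ((ρ g : Matrix (Fin n) (Fin n) ℤ_[ℓ]) - 1) = 0 := by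
    ext i j; exact hzero i j
  have : (ρ g : Matrix (Fin n) (Fin n) ℤ_[ℓ]) = 1 := by rwa [sub_eq_zero] at hmat
  exact Units.ext this
end

section
/- Let ℓ be a prime number, n ≥ 1, and let G be a profinite group such that every open normal subgroup of G has finite index not divisible by ℓ. Let ρ : G → GL_n(ℤ_ℓ) be a continuous group homomorphism. Then the composite π ∘ ρ : G → GL_n(𝔽_ℓ) has the same kernel as ρ, the image ρ(G) injects into GL_n(𝔽_ℓ), and in particular ρ(G) is a finite group of cardinality at most |GL_n(𝔽_ℓ)|. -/
open IsUltrametricDist in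
lemma mul_entry_bound {p : ℕ} [Fact p.Prime] {n : ℕ}
    (A B : Matrix (Fin n) (Fin n) ℤ_[p]) {a b : ℝ}
    (ha0 : 0 ≤ a)
    (hA : ∀ i j, ‖A i j‖ ≤ a) (hB : ∀ i j, ‖B i j‖ ≤ b) :
    ∀ i j, ‖(A * B) i j‖ ≤ a * b := by
  intro i j
  rw [Matrix.mul_apply]
  refine norm_sum_le_of_forall_le_of_nonneg (by
    have := (norm_nonneg (A i i)).trans (hA i i)
    have := (norm_nonneg (B i i)).trans (hB i i)
    positivity) ?_
  intro k _
  calc ‖A i k * B k j‖ ≤ ‖A i k‖ * ‖B k j‖ := norm_mul_le _ _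
    _ ≤ a * b := mul_le_mul (hA i k) (hB k j) (norm_nonneg _) ha0

lemma pow_sub_bound {p : ℕ} [Fact p.Prime] {n : ℕ}
    (z : Matrix (Fin n) (Fin n) ℤ_[p]) {c : ℝ} (hc0 : 0 ≤ c) (hc1 : c ≤ 1)
    (hz : ∀ i j, ‖z i j‖ ≤ c) :
    ∀ m : ℕ, ∀ i j, ‖((1 + z) ^ m - 1 - (m : Matrix (Fin n) (Fin n) ℤ_[p]) * z) i j‖ ≤ c * c := by
  intro m
  induction m with
  | zero => intro i j; simp [hc0, mul_nonneg hc0 hc0]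
  | succ m ih =>
    set D := (1 + z) ^ m - 1 - (m : Matrix (Fin n) (Fin n) ℤ_[p]) * z with hD
    have key : (1 + z) ^ (m+1) - 1 - ((m+1 : ℕ) : Matrix (Fin n) (Fin n) ℤ_[p]) * z
        = D + D * z + (m : Matrix (Fin n) (Fin n) ℤ_[p]) * (z * z) := by
      rw [hD, pow_succ]
      push_cast
      noncomm_ring
    intro i j
    rw [key]
    have h1 : ‖(D * z) i j‖ ≤ c * c := by
      have := mul_entry_bound D z (mul_nonneg hc0 hc0) ih hz i j
      calc ‖(D * z) i j‖ ≤ (c * c) * c := this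
        _ ≤ (c * c) * 1 := mul_le_mul_of_nonneg_left hc1 (mul_nonneg hc0 hc0)
        _ = c * c := mul_one _
    have h2 : ‖((m : Matrix (Fin n) (Fin n) ℤ_[p]) * (z * z)) i j‖ ≤ c * c := by
      rw [← nsmul_eq_mul, Matrix.smul_apply, nsmul_eq_mul, norm_mul]
      calc ‖((m : ℕ) : ℤ_[p])‖ * ‖(z * z) i j‖ ≤ 1 * (c * c) :=
            mul_le_mul (PadicInt.norm_le_one _)
              (mul_entry_bound z z hc0 hz hz i j) (norm_nonneg _) zero_le_one
        _ = c * c := one_mul _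
    calc ‖(D + D * z + (m : Matrix (Fin n) (Fin n) ℤ_[p]) * (z * z)) i j‖
        = ‖(D i j + (D * z) i j) + ((m : Matrix (Fin n) (Fin n) ℤ_[p]) * (z * z)) i j‖ := by
          simp [Matrix.add_apply]
      _ ≤ max (max ‖D i j‖ ‖(D * z) i j‖) ‖((m : Matrix (Fin n) (Fin n) ℤ_[p]) * (z * z)) i j‖ := by
          refine (IsUltrametricDist.norm_add_le_max _ _).trans ?_
          exact max_le_max (IsUltrametricDist.norm_add_le_max _ _) le_rfl
      _ ≤ c * c := max_le (max_le (ih i j) h1) h2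

lemma units_map_eq_one_iff {p : ℕ} [Fact p.Prime] {n : ℕ} {S : Type*} [CommRing S]
    (f : ℤ_[p] →+* S) {c : ℝ} (hker : ∀ y : ℤ_[p], f y = 0 ↔ ‖y‖ ≤ c)
    (x : Matrix.GeneralLinearGroup (Fin n) ℤ_[p]) :
    Units.map (RingHom.mapMatrix f).toMonoidHom x = 1 ↔
      ∀ i j, ‖((x : Matrix (Fin n) (Fin n) ℤ_[p]) - 1) i j‖ ≤ c := by
  rw [Units.ext_iff]
  have : (Units.map (RingHom.mapMatrix f).toMonoidHom x : Matrix (Fin n) (Fin n) S)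
      = ((x : Matrix (Fin n) (Fin n) ℤ_[p])).map f := by
    simp [Units.coe_map, RingHom.mapMatrix_apply]
  rw [this, Units.val_one]
  constructor
  · intro h i j
    rw [← hker]
    rw [Matrix.sub_apply, map_sub]
    have h1 : f ((x : Matrix (Fin n) (Fin n) ℤ_[p]) i j)
        = (1 : Matrix (Fin n) (Fin n) S) i j := by
      rw [← Matrix.map_apply (f := f), h]
    rw [h1]
    by_cases hij : i = j
    · subst hij; simp [Matrix.one_apply]
    · simp [Matrix.one_apply, hij]
  · intro h
    ext i j
    rw [Matrix.map_apply]
    have := (hker _).mpr (h i j)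
    rw [Matrix.sub_apply, map_sub, sub_eq_zero] at this
    rw [this]
    by_cases hij : i = j
    · subst hij; simp [Matrix.one_apply]
    · simp [Matrix.one_apply, hij]

lemma cond_isOpen {p : ℕ} [Fact p.Prime] {n : ℕ} {c : ℝ} (hc : 0 < c) :
    IsOpen {x : Matrix.GeneralLinearGroup (Fin n) ℤ_[p] |
      ∀ i j, ‖((x : Matrix (Fin n) (Fin n) ℤ_[p]) - 1) i j‖ ≤ c} := by
  have heq : {x : Matrix.GeneralLinearGroup (Fin n) ℤ_[p] |
      ∀ i j, ‖((x : Matrix (Fin n) (Fin n) ℤ_[p]) - 1) i j‖ ≤ c}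
      = ⋂ i, ⋂ j, (fun x : Matrix.GeneralLinearGroup (Fin n) ℤ_[p] =>
          ((x : Matrix (Fin n) (Fin n) ℤ_[p]) - 1) i j) ⁻¹' Metric.closedBall 0 c := by
    ext x
    simp [Metric.mem_closedBall, dist_zero_right]
  rw [heq]
  refine isOpen_iInter_of_finite fun i => isOpen_iInter_of_finite fun j => ?_
  refine IsOpen.preimage ?_ (IsUltrametricDist.isOpen_closedBall _ (ne_of_gt hc))
  exact Continuous.matrix_elem (Units.continuous_val.sub continuous_const) i j

/-- With G profinite all of whose open normal subgroups have finite index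
prime to ℓ, and ρ : G → GL_n(ℤ_ℓ) continuous, the composite with the reduction map
π : GL_n(ℤ_ℓ) → GL_n(𝔽_ℓ) has the same kernel as ρ, π is injective on the image of ρ,
and the image of ρ is finite of cardinality at most |GL_n(𝔽_ℓ)|. -/
theorem image_injects_into_GL_n_F_ell
    (ℓ : ℕ) [Fact ℓ.Prime] (n : ℕ) (hn : 1 ≤ n)
    (G : Type*) [Group G] [TopologicalSpace G] [IsTopologicalGroup G]
    [CompactSpace G] [T2Space G] [TotallyDisconnectedSpace G]
    (hG : ∀ N : Subgroup G, N.Normal → IsOpen (N : Set G) →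
      N.FiniteIndex ∧ ¬ (ℓ ∣ N.index))
    (ρ : G →* Matrix.GeneralLinearGroup (Fin n) ℤ_[ℓ])
    (hρ : Continuous ρ)
    (π : Matrix.GeneralLinearGroup (Fin n) ℤ_[ℓ] →*
          Matrix.GeneralLinearGroup (Fin n) (ZMod ℓ))
    (hπ : π = Units.map (RingHom.mapMatrix (PadicInt.toZMod (p := ℓ))).toMonoidHom) :
    (π.comp ρ).ker = ρ.ker ∧
    Set.InjOn π (Set.range ρ) ∧
    (Set.range ρ).Finite ∧
    Nat.card (Set.range ρ) ≤
      Nat.card (Matrix.GeneralLinearGroup (Fin n) (ZMod ℓ)) := by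
  have hprime : ℓ.Prime := Fact.out
  have hl1 : (1:ℝ) < (ℓ:ℝ) := by exact_mod_cast hprime.one_lt
  have hl0 : (0:ℝ) < (ℓ:ℝ) := lt_trans one_pos hl1
  -- core claim
  have core : ∀ g : G, π (ρ g) = 1 → ρ g = 1 := by
    intro g hg
    set x := ρ g with hx
    set z : Matrix (Fin n) (Fin n) ℤ_[ℓ] := (x : Matrix (Fin n) (Fin n) ℤ_[ℓ]) - 1 with hzdef
    have claim : ∀ k : ℕ, ∀ i j, ‖z i j‖ ≤ (ℓ : ℝ) ^ (-(k+1) : ℤ) := by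
      intro k
      induction k with
      | zero =>
        have hker1 : ∀ y : ℤ_[ℓ], PadicInt.toZMod (p := ℓ) y = 0 ↔ ‖y‖ ≤ (ℓ:ℝ)^(-(0+1) : ℤ) := by
          intro y
          rw [← RingHom.mem_ker, PadicInt.ker_toZMod, PadicInt.maximalIdeal_eq_span_p]
          rw [show ((-(0+1) : ℤ)) = -(1:ℕ) by norm_num,
            PadicInt.norm_le_pow_iff_mem_span_pow, pow_one]
        rw [hπ] at hg
        exact (units_map_eq_one_iff _ hker1 x).mp hg
      | succ k ih =>
        set f := PadicInt.toZModPow (p := ℓ) (k+2) with hf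
        have hkerf : ∀ y : ℤ_[ℓ], f y = 0 ↔ ‖y‖ ≤ (ℓ:ℝ)^(-(k+1+1) : ℤ) := by
          intro y
          rw [hf, ← RingHom.mem_ker, PadicInt.ker_toZModPow,
            ← PadicInt.norm_le_pow_iff_mem_span_pow]
          norm_num
          ring_nf
        set φ : Matrix.GeneralLinearGroup (Fin n) ℤ_[ℓ] →*
            Matrix.GeneralLinearGroup (Fin n) (ZMod (ℓ^(k+2))) :=
          Units.map (RingHom.mapMatrix f).toMonoidHom with hφ
        set N : Subgroup G := (φ.comp ρ).ker with hN
        have hNopen : IsOpen (N : Set G) := by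
          have hNeq : (N : Set G) = ρ ⁻¹' {y : Matrix.GeneralLinearGroup (Fin n) ℤ_[ℓ] |
              ∀ i j, ‖((y : Matrix (Fin n) (Fin n) ℤ_[ℓ]) - 1) i j‖ ≤ (ℓ:ℝ)^(-(k+1+1) : ℤ)} := by
            ext a
            simp only [hN, SetLike.mem_coe, MonoidHom.mem_ker, MonoidHom.comp_apply,
              Set.mem_preimage, Set.mem_setOf_eq]
            exact units_map_eq_one_iff f hkerf (ρ a)
          rw [hNeq]
          exact (cond_isOpen (by positivity)).preimage hρ
        obtain ⟨hfin, hnd⟩ := hG N inferInstance hNopen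
        haveI := hfin
        set m := N.index with hm
        have hgm : g ^ m ∈ N := Subgroup.pow_index_mem N g
        have hxm : ∀ i j, ‖(((x ^ m : Matrix.GeneralLinearGroup (Fin n) ℤ_[ℓ]) :
            Matrix (Fin n) (Fin n) ℤ_[ℓ]) - 1) i j‖ ≤ (ℓ:ℝ)^(-(k+1+1) : ℤ) := by
          have h1 : φ (x ^ m) = 1 := by
            rw [hx, ← map_pow ρ]
            exact hgm
          exact (units_map_eq_one_iff f hkerf _).mp h1
        -- norm of m is 1
        have hmnorm : ‖((m : ℕ) : ℤ_[ℓ])‖ = 1 := by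
          refine le_antisymm (PadicInt.norm_le_one _) ?_
          by_contra hlt
          push_neg at hlt
          have h2 : ‖((m : ℕ) : ℤ_[ℓ])‖ ≤ (ℓ:ℝ) ^ (-(1:ℕ) : ℤ) := by
            rw [PadicInt.norm_le_pow_iff_norm_lt_pow_add_one]
            simpa using hlt
          have h3 : ((ℓ:ℤ)^(1:ℕ)) ∣ (m : ℤ) := by
            rw [← PadicInt.norm_int_le_pow_iff_dvd]
            exact_mod_cast h2
          rw [pow_one] at h3
          exact hnd (by exact_mod_cast h3)
        -- algebra
        set c : ℝ := (ℓ:ℝ)^(-(k+1) : ℤ) with hc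
        have hc0 : 0 ≤ c := le_of_lt (by positivity)
        have hc1 : c ≤ 1 := by
          rw [hc]
          calc (ℓ:ℝ)^(-(k+1) : ℤ) ≤ (ℓ:ℝ)^(0:ℤ) :=
            zpow_le_zpow_right₀ (le_of_lt hl1) (by omega)
          _ = 1 := zpow_zero _
        have hcc : c * c ≤ (ℓ:ℝ)^(-(k+1+1) : ℤ) := by
          rw [hc, ← zpow_add₀ (ne_of_gt hl0)]
          exact zpow_le_zpow_right₀ (le_of_lt hl1) (by omega)
        have hD := pow_sub_bound z hc0 hc1 ih m
        have h1z : (1 : Matrix (Fin n) (Fin n) ℤ_[ℓ]) + z = (x : Matrix (Fin n) (Fin n) ℤ_[ℓ]) := by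
          rw [hzdef]; abel
        intro i j
        have hsplit : (m : Matrix (Fin n) (Fin n) ℤ_[ℓ]) * z
            = (((x : Matrix (Fin n) (Fin n) ℤ_[ℓ]))^m - 1)
              - ((1 + z)^m - 1 - (m : Matrix (Fin n) (Fin n) ℤ_[ℓ]) * z) := by
          rw [h1z]; abel
        have hxm' : ∀ i j, ‖(((x : Matrix (Fin n) (Fin n) ℤ_[ℓ]))^m - 1) i j‖
            ≤ (ℓ:ℝ)^(-(k+1+1) : ℤ) := by
          intro i j
          have := hxm i j
          rwa [Units.val_pow_eq_pow_val] at this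
        have hmz : ‖((m : Matrix (Fin n) (Fin n) ℤ_[ℓ]) * z) i j‖ ≤ (ℓ:ℝ)^(-(k+1+1) : ℤ) := by
          rw [hsplit, Matrix.sub_apply, sub_eq_add_neg]
          refine (IsUltrametricDist.norm_add_le_max _ _).trans ?_
          rw [norm_neg]
          exact max_le (hxm' i j) ((hD i j).trans hcc)
        have hfinal : ‖((m : Matrix (Fin n) (Fin n) ℤ_[ℓ]) * z) i j‖ = ‖z i j‖ := by
          rw [← nsmul_eq_mul, Matrix.smul_apply, nsmul_eq_mul, norm_mul, hmnorm, one_mul]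
        rw [← hfinal]
        exact hmz
    -- conclude z = 0
    have hz0 : z = 0 := by
      ext i j
      rw [Matrix.zero_apply]
      rw [← norm_eq_zero]
      by_contra hne
      have hpos : 0 < ‖z i j‖ := lt_of_le_of_ne (norm_nonneg _) (Ne.symm hne)
      obtain ⟨k, hk⟩ := exists_pow_lt_of_lt_one hpos (by
        rw [inv_lt_one_iff₀]; right; exact hl1 : (ℓ:ℝ)⁻¹ < 1)
      have := claim k i j
      have h2 : (ℓ:ℝ)^(-(k+1) : ℤ) ≤ ((ℓ:ℝ)⁻¹)^k := by
        rw [← zpow_natCast ((ℓ:ℝ)⁻¹), ← zpow_neg_one, ← zpow_mul]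
        refine zpow_le_zpow_right₀ (le_of_lt hl1) (by omega)
      exact absurd (this.trans h2) (not_le.mpr hk)
    have hxval : (x : Matrix (Fin n) (Fin n) ℤ_[ℓ]) = 1 := by
      have h : (x : Matrix (Fin n) (Fin n) ℤ_[ℓ]) - 1 = 0 := by rw [← hzdef]; exact hz0
      exact sub_eq_zero.mp h
    exact Units.ext hxval
  -- kernel equality
  have hker : (π.comp ρ).ker = ρ.ker := by
    ext g
    simp only [MonoidHom.mem_ker, MonoidHom.comp_apply]
    exact ⟨core g, fun h => by rw [h, map_one]⟩
  have hinj : Set.InjOn π (Set.range ρ) := by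
    rintro _ ⟨a, rfl⟩ _ ⟨b, rfl⟩ hab
    have h1 : π (ρ (a * b⁻¹)) = 1 := by
      rw [map_mul, map_inv, map_mul, map_inv, hab, mul_inv_cancel]
    have h2 := core _ h1
    rw [map_mul, map_inv] at h2
    exact mul_inv_eq_one.mp h2
  haveI : NeZero ℓ := ⟨hprime.ne_zero⟩
  have hfin : (Set.range ⇑ρ).Finite := Set.Finite.of_finite_image (Set.toFinite _) hinj
  refine ⟨hker, hinj, hfin, ?_⟩
  exact Nat.card_le_card_of_injective _ (Set.injOn_iff_injective.mp hinj)
end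

section
/- Let k be an algebraically closed field of characteristic p > 0 and let n ≥ 1 be an integer. Equip k[X] with the algebra structure over (a second copy of) k[X] via the k-algebra homomorphism sending X to X^{p^n} − X. Then every automorphism of this algebra (i.e. every k[X]-algebra automorphism of k[X]) is of the form X ↦ X + a for a unique a ∈ k with a^{p^n} = a, and the group of such automorphisms is isomorphic to the additive group (ℤ/pℤ)^n. -/
open Polynomial

namespace ASdeck

variable (k : Type) [Field k] (p n : ℕ)

/-- The Artin-Schreier ring hom. -/
@[reducible] noncomputable def fAS : Polynomial k →+* Polynomial k :=
  (Polynomial.aeval (Polynomial.X ^ p ^ n - Polynomial.X : Polynomial k)).toRingHom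

/-- Deck group. -/
@[reducible] noncomputable def GAS : Type :=
  @AlgEquiv (Polynomial k) (Polynomial k) (Polynomial k) _ _ _
    (fAS k p n).toAlgebra (fAS k p n).toAlgebra


variable {k p n}

theorem GAS.map_C (σ : GAS k p n) (c : k) : σ (C c) = C c := by
  letI := (fAS k p n).toAlgebra
  have h := σ.commutes (C c)
  have he : (fAS k p n) (C c) = C c := by
    simp [fAS, Polynomial.algebraMap_eq]
  rwa [RingHom.algebraMap_toAlgebra, he] at h

theorem GAS.map_t (σ : GAS k p n) : σ (X ^ p ^ n - X) = X ^ p ^ n - X := by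
  letI := (fAS k p n).toAlgebra
  have h := σ.commutes (X : Polynomial k)
  have he : (fAS k p n) (X : Polynomial k) = X ^ p ^ n - X := by
    simp [fAS]
  rwa [RingHom.algebraMap_toAlgebra, he] at h

/-- σ viewed as k-algebra hom. -/
noncomputable def GAS.toK (σ : GAS k p n) : Polynomial k →ₐ[k] Polynomial k where
  toRingHom :=
    letI := (fAS k p n).toAlgebra
    (σ : Polynomial k ≃+* Polynomial k).toRingHom
  commutes' c := by
    simpa [Polynomial.algebraMap_eq] using GAS.map_C σ c

theorem GAS.apply_eq (σ : GAS k p n) (q : Polynomial k) : σ q = aeval (σ X) q := by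
  have : σ.toK = aeval (σ.toK X) := by
    apply Polynomial.algHom_ext
    simp
  have h2 : σ.toK q = aeval (σ.toK X) q := by rw [← this]
  simpa [GAS.toK] using h2


variable [Fact p.Prime] [CharP k p]

set_option linter.unusedSectionVars false in
theorem GAS.exists_eq (hn : 1 ≤ n) (σ : GAS k p n) :
    ∃ b : k, b ^ p ^ n = b ∧ σ X = X + C b := by
  letI : Algebra (Polynomial k) (Polynomial k) := (fAS k p n).toAlgebra
  have hp : 1 < p := (Fact.out : p.Prime).one_lt
  have hpn : 1 < p ^ n := Nat.one_lt_pow (by omega) hp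
  have key : ∀ (τ : GAS k p n) (q : Polynomial k), τ q = q.comp (τ X) := by
    intro τ q
    rw [GAS.apply_eq τ q, Polynomial.aeval_def, Polynomial.algebraMap_eq]
    rfl
  set g := σ X with hg
  obtain ⟨h, hσh⟩ := σ.surjective X
  have hhg : h.comp g = X := by rw [← key σ h, hσh]
  have hdeg : g.natDegree = 1 := by
    have h1 := congrArg natDegree hhg
    rw [natDegree_comp, natDegree_X] at h1
    exact Nat.eq_one_of_mul_eq_one_left h1
  have hdle : g.degree ≤ 1 := by
    rw [show (1 : WithBot ℕ) = ((1:ℕ) : WithBot ℕ) from rfl, ← hdeg]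
    exact degree_le_natDegree
  have hgform := eq_X_add_C_of_degree_le_one hdle
  set u := g.coeff 1 with hu'
  set b := g.coeff 0 with hb'
  have heq : g ^ p ^ n - g = X ^ p ^ n - X := by
    have h2 := GAS.map_t σ
    rw [map_sub, map_pow] at h2
    exact h2
  have hpow : g ^ p ^ n = C (u ^ p ^ n) * X ^ p ^ n + C (b ^ p ^ n) := by
    rw [hgform, add_pow_char_pow, mul_pow, ← C_pow, ← C_pow]
  rw [hpow, hgform] at heq
  have hcoef1 := congrArg (fun q => Polynomial.coeff q 1) heq
  have hcoef0 := congrArg (fun q => Polynomial.coeff q 0) heq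
  simp only [coeff_sub, coeff_add, coeff_C_mul, coeff_X_pow, coeff_C, coeff_X_one, coeff_X_zero,
    if_neg hpn.ne, if_neg hpn.ne', mul_one, mul_zero, zero_add, add_zero, one_ne_zero, if_false,
    zero_sub, if_pos rfl] at hcoef1 hcoef0
  have hu1 : u = 1 := neg_inj.mp hcoef1
  have hb1 : b ^ p ^ n = b := by
    simp only [if_true, if_neg (show ¬(0 = p ^ n) by omega), mul_zero, zero_add, add_zero,
      zero_sub, sub_zero] at hcoef0
    linear_combination hcoef0
  refine ⟨b, hb1, ?_⟩
  rw [hgform, hu1, C_1, one_mul]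


variable (k p n)

/-- The Artin–Schreier alg hom X ↦ X + C b over the base k[X]. -/
noncomputable def ASalgHom (b : k) (hb : b ^ p ^ n = b) :
    @AlgHom (Polynomial k) (Polynomial k) (Polynomial k) _ _ _
      (fAS k p n).toAlgebra (fAS k p n).toAlgebra :=
  letI := (fAS k p n).toAlgebra
  { toRingHom := ((aeval (X + C b) : Polynomial k →ₐ[k] Polynomial k) : Polynomial k →+* Polynomial k)
    commutes' := fun q => by
      show aeval (X + C b) ((fAS k p n) q) = (fAS k p n) q
      have ht : aeval (X + C b) (X ^ p ^ n - X : Polynomial k) = X ^ p ^ n - X := by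
        rw [map_sub, map_pow, aeval_X, add_pow_char_pow, ← C_pow, hb]
        ring
      calc aeval (X + C b) (aeval (X ^ p ^ n - X) q)
          = aeval (aeval (X + C b) (X ^ p ^ n - X : Polynomial k)) q :=
            (aeval_algHom_apply (aeval (X + C b) : Polynomial k →ₐ[k] Polynomial k) _ q).symm
        _ = (fAS k p n) q := by rw [ht]; rfl }

theorem ASalgHom_comp (b c : k) (hb : b ^ p ^ n = b) (hc : c ^ p ^ n = c) (q : Polynomial k) :
    ASalgHom k p n b hb (ASalgHom k p n c hc q) = aeval (X + C (c + b)) q := by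
  show aeval (X + C b) (aeval (X + C c) q) = _
  rw [(aeval_algHom_apply (aeval (X + C b) : Polynomial k →ₐ[k] Polynomial k) _ q).symm]
  have h2 : aeval (X + C b) (X + C c : Polynomial k) = X + C (c + b) := by
    rw [map_add, aeval_X, aeval_C, Polynomial.algebraMap_eq, add_assoc, ← C_add, add_comm b c]
  rw [h2]

theorem neg_mem_AS (b : k) (hb : b ^ p ^ n = b) : (-b) ^ p ^ n = -b := by
  have h := sub_pow_char_pow (R := k) (p := p) (n := n) (x := 0) (y := b)
  have hp : 1 < p := (Fact.out : p.Prime).one_lt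
  have h0 : (0:k) ^ p ^ n = 0 := zero_pow (by positivity)
  simpa [h0, hb, zero_sub] using h

/-- The deck transformation X ↦ X + C b. -/
noncomputable def tauAS (b : k) (hb : b ^ p ^ n = b) : GAS k p n :=
  letI := (fAS k p n).toAlgebra
  AlgEquiv.ofAlgHom (ASalgHom k p n b hb) (ASalgHom k p n (-b) (neg_mem_AS k p n b hb))
    (AlgHom.ext fun q => by rw [AlgHom.comp_apply, ASalgHom_comp]; simp [aeval_X_left_apply])
    (AlgHom.ext fun q => by rw [AlgHom.comp_apply, ASalgHom_comp]; simp [aeval_X_left_apply])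

theorem tauAS_X (b : k) (hb : b ^ p ^ n = b) : tauAS k p n b hb X = X + C b := by
  show aeval (X + C b) (X : Polynomial k) = X + C b
  simp

/-- The subfield of Artin–Schreier roots. -/
def FsubAS : Subfield k where
  carrier := {x : k | x ^ p ^ n = x}
  mul_mem' := fun ha hb => by
    simp only [Set.mem_setOf_eq] at *
    rw [mul_pow, ha, hb]
  one_mem' := one_pow _
  add_mem' := fun ha hb => by
    simp only [Set.mem_setOf_eq] at *
    rw [add_pow_char_pow, ha, hb]
  zero_mem' := by
    have hp : 1 < p := (Fact.out : p.Prime).one_lt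
    simp only [Set.mem_setOf_eq]
    exact zero_pow (by positivity)
  neg_mem' := fun ha => by
    simp only [Set.mem_setOf_eq] at *
    exact neg_mem_AS k p n _ ha
  inv_mem' := fun a ha => by
    simp only [Set.mem_setOf_eq] at *
    rw [inv_pow, ha]

theorem card_FsubAS [IsAlgClosed k] (hn : 1 ≤ n) [Fintype (FsubAS k p n)] :
    Fintype.card (FsubAS k p n) = p ^ n := by
  have hp : 1 < p := (Fact.out : p.Prime).one_lt
  have hne : (X ^ p ^ n - X : Polynomial k) ≠ 0 :=
    FiniteField.X_pow_card_pow_sub_X_ne_zero _ (by omega) hp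
  have e : ((X ^ p ^ n - X : Polynomial k).rootSet k) ≃ FsubAS k p n := by
    apply Equiv.subtypeEquivRight
    intro x
    rw [mem_rootSet]
    simp only [map_sub, map_pow, aeval_X, sub_eq_zero]
    constructor
    · rintro ⟨-, h⟩; exact h
    · intro h; exact ⟨hne, h⟩
  have hcard : Fintype.card ((X ^ p ^ n - X : Polynomial k).rootSet k) = p ^ n := by
    rw [card_rootSet_eq_natDegree (galois_poly_separable p (p ^ n) (dvd_pow_self p (by omega)))
      (IsAlgClosed.splits _),
      FiniteField.X_pow_card_pow_sub_X_natDegree_eq _ (by omega) hp]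
  rw [← hcard]
  exact (Fintype.card_congr e).symm


theorem mem_FsubAS {x : k} : x ∈ FsubAS k p n ↔ x ^ p ^ n = x := Iff.rfl

/-- Equivalence with the root set. -/
noncomputable def rootSetEquivFsubAS [IsAlgClosed k] (hn : 1 ≤ n) :
    ((X ^ p ^ n - X : Polynomial k).rootSet k) ≃ FsubAS k p n := by
  have hp : 1 < p := (Fact.out : p.Prime).one_lt
  have hne : (X ^ p ^ n - X : Polynomial k) ≠ 0 :=
    FiniteField.X_pow_card_pow_sub_X_ne_zero _ (by omega) hp
  apply Equiv.subtypeEquivRight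
  intro x
  rw [mem_rootSet, mem_FsubAS]
  simp only [map_sub, map_pow, aeval_X, sub_eq_zero]
  exact ⟨fun h => h.2, fun h => ⟨hne, h⟩⟩

noncomputable def FsubAddEquiv [IsAlgClosed k] (hn : 1 ≤ n) :
    FsubAS k p n ≃+ (Fin n → ZMod p) := by
  haveI : CharP (FsubAS k p n) p :=
    (FsubAS k p n).subtype.charP Subtype.val_injective p
  letI : Algebra (ZMod p) (FsubAS k p n) := ZMod.algebra _ p
  haveI : Fintype (FsubAS k p n) := Fintype.ofEquiv _ (rootSetEquivFsubAS k p n hn)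
  have hcard : Fintype.card (FsubAS k p n) = p ^ n := card_FsubAS k p n hn
  have hfr : Module.finrank (ZMod p) (FsubAS k p n) = n := by
    have h2 := Module.card_eq_pow_finrank (K := ZMod p) (V := FsubAS k p n)
    rw [ZMod.card, hcard] at h2
    exact (Nat.pow_right_injective (Fact.out : p.Prime).two_le h2).symm
  exact (Module.finBasisOfFinrankEq (ZMod p) (FsubAS k p n) hfr).equivFun.toAddEquiv

theorem GAS.ext_X {σ τ : GAS k p n} (h : σ X = τ X) : σ = τ := by
  letI := (fAS k p n).toAlgebra
  apply AlgEquiv.ext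
  intro q
  rw [GAS.apply_eq σ q, GAS.apply_eq τ q, h]

theorem GAS.coeff0 (hn : 1 ≤ n) (σ : GAS k p n) :
    ((σ X).coeff 0) ^ p ^ n = (σ X).coeff 0 := by
  obtain ⟨b, hb, hX⟩ := GAS.exists_eq hn σ
  rw [hX]
  simpa using hb

noncomputable def GASMulEquiv (hn : 1 ≤ n) :
    GAS k p n ≃* Multiplicative (FsubAS k p n) where
  toFun σ := Multiplicative.ofAdd (⟨(σ X).coeff 0, GAS.coeff0 k p n hn σ⟩ : FsubAS k p n)
  invFun a := tauAS k p n (a.toAdd : k) ((mem_FsubAS k p n).mp a.toAdd.2)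
  left_inv σ := by
    obtain ⟨b, hb, hX⟩ := GAS.exists_eq hn σ
    apply GAS.ext_X
    rw [tauAS_X]
    simp [hX]
  right_inv a := by
    apply Multiplicative.toAdd.injective
    apply Subtype.ext
    show (tauAS k p n (a.toAdd : k) ((mem_FsubAS k p n).mp a.toAdd.2) X).coeff 0 = (a.toAdd : k)
    rw [tauAS_X]
    simp
  map_mul' σ τ := by
    letI := (fAS k p n).toAlgebra
    have hmul : (σ * τ) X = σ (τ X) := rfl
    obtain ⟨b, hb, hXb⟩ := GAS.exists_eq hn σ
    obtain ⟨c, hc, hXc⟩ := GAS.exists_eq hn τ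
    have h2 : (σ * τ) X = X + C b + C c := by
      rw [hmul, hXc, map_add, hXb, GAS.map_C]
    show Multiplicative.ofAdd _ = Multiplicative.ofAdd _ * Multiplicative.ofAdd _
    rw [← ofAdd_add]
    congr 1
    apply Subtype.ext
    show ((σ * τ) X).coeff 0 = (σ X).coeff 0 + (τ X).coeff 0
    rw [h2, hXb, hXc]
    simp

end ASdeck

open ASdeck in
/-- Equip k[X] with the k[X]-algebra structure given by X ↦ X^{p^n} − X,
k algebraically closed of characteristic p > 0. Every k[X]-algebra automorphism of k[X]
is of the form X ↦ X + a for a unique a ∈ k with a^{p^n} = a, and the group of these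
automorphisms is isomorphic to the additive group (ℤ/pℤ)^n. -/
theorem artin_schreier_deck_group
    (k : Type) [Field k] [IsAlgClosed k] (p : ℕ) [Fact p.Prime] [CharP k p]
    (n : ℕ) (hn : 1 ≤ n) :
    let f : Polynomial k →+* Polynomial k :=
      (Polynomial.aeval (Polynomial.X ^ p ^ n - Polynomial.X : Polynomial k)).toRingHom
    (∀ σ : @AlgEquiv (Polynomial k) (Polynomial k) (Polynomial k) _ _ _
        f.toAlgebra f.toAlgebra,
      ∃! a : k, a ^ p ^ n = a ∧
        σ (Polynomial.X : Polynomial k) = Polynomial.X + Polynomial.C a) ∧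
    Nonempty
      ((@AlgEquiv (Polynomial k) (Polynomial k) (Polynomial k) _ _ _
          f.toAlgebra f.toAlgebra) ≃* Multiplicative (Fin n → ZMod p)) := by
  intro f
  constructor
  · intro σ
    obtain ⟨b, hb, hX⟩ := GAS.exists_eq (k := k) (p := p) (n := n) hn σ
    refine ⟨b, ⟨hb, hX⟩, ?_⟩
    rintro a ⟨-, ha⟩
    have h2 : Polynomial.C a = Polynomial.C b := by
      have := ha.symm.trans hX
      exact add_left_cancel this
    exact Polynomial.C_injective h2
  · exact ⟨(GASMulEquiv (k := k) (p := p) (n := n) hn).trans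
      (FsubAddEquiv k p n hn).toMultiplicative⟩
end
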